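/- Let m ≥ 3 and n ≥ m, and let τ = (a₁ a₂ a₃) be a 3-cycle in Sₙ. Introduce m−2 new elements x₁,…,x_{m−2}. Then τ⁻¹ = (a₁ a₃ x₁ x₂ ⋯ x_{m−2}) · (a₃ a₂ x_{m−2} ⋯ x₂ x₁), a product of two m-cycles in S_{n+m−2} each of which moves an outsider, and these two m-cycles permute distinct sets of m elements. -/

import Mathlib

lemma getElem_idx_congr {l : List ℕ} {i j : ℕ} (hij : i = j) (h : i < l.length) :
    l[i] = l[j]'(hij ▸ h) := by subst hij; rfl

lemma aux_eq (a₁ a₂ a₃ : ℕ) (xs : List ℕ)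
    (h12 : a₁ ≠ a₂) (h13 : a₁ ≠ a₃) (h23 : a₂ ≠ a₃)
    (hxs : xs.Nodup) (hne : xs ≠ [])
    (h1 : a₁ ∉ xs) (h2 : a₂ ∉ xs) (h3 : a₃ ∉ xs) :
    (([a₁, a₂, a₃] : List ℕ).formPerm)⁻¹ =
      (a₁ :: a₃ :: xs).formPerm * (a₃ :: a₂ :: xs.reverse).formPerm := by
  have hk : 1 ≤ xs.length := List.length_pos_iff.mpr hne
  have hL1 : (a₁ :: a₃ :: xs).Nodup := by
    simp only [List.nodup_cons, List.mem_cons]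
    exact ⟨by tauto, h3, hxs⟩
  have hL2 : (a₃ :: a₂ :: xs.reverse).Nodup := by
    simp only [List.nodup_cons, List.mem_cons, List.mem_reverse, List.nodup_reverse]
    exact ⟨by tauto, by simpa using h2, hxs⟩
  have hrev : (([a₁, a₂, a₃] : List ℕ).formPerm)⁻¹ = ([a₃, a₂, a₁] : List ℕ).formPerm := by
    rw [← List.formPerm_reverse]; rfl
  rw [hrev]
  ext z
  rw [Equiv.Perm.mul_apply]
  have hτ : ([a₃, a₂, a₁] : List ℕ).Nodup := by
    simp only [List.nodup_cons, List.mem_cons]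
    push_neg
    exact ⟨⟨h23.symm, h13.symm, by simp⟩, ⟨h12.symm, by simp⟩, by simp⟩
  by_cases hz1 : z = a₁
  · rw [hz1]
    have hg : (a₃ :: a₂ :: xs.reverse).formPerm a₁ = a₁ := by
      apply List.formPerm_apply_of_notMem
      simp only [List.mem_cons, List.mem_reverse]
      push_neg; exact ⟨h13, h12, h1⟩
    rw [hg, List.formPerm_apply_head _ _ _ hL1]
    -- τ' a₁ = a₃ : a₁ is last of [a₃,a₂,a₁]
    have := List.formPerm_apply_getLast a₃ [a₂, a₁]
    simpa using this.symm
  · by_cases hz3 : z = a₃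
    · rw [hz3]
      rw [List.formPerm_apply_head _ _ _ hL2]
      have hf : (a₁ :: a₃ :: xs).formPerm a₂ = a₂ := by
        apply List.formPerm_apply_of_notMem
        simp only [List.mem_cons]
        push_neg; exact ⟨h12.symm, h23, h2⟩
      rw [hf, List.formPerm_apply_head _ _ _ hτ]
    · by_cases hz2 : z = a₂
      · rw [hz2]
        -- g a₂ = xs.reverse[0] = xs.getLast
        have hlt : (1:ℕ) + 1 < (a₃ :: a₂ :: xs.reverse).length := by simp; omega
        have hg := List.formPerm_apply_lt_getElem _ hL2 1 hlt
        simp only [List.getElem_cons_succ, List.getElem_cons_zero] at hg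
        rw [hg]
        have hrev0 : xs.reverse[0]'(by simpa) = xs.getLast hne := by
          rw [List.getElem_reverse, List.getLast_eq_getElem]
          apply getElem_idx_congr; omega
        rw [hrev0]
        -- f (xs.getLast) = a₁
        have hlast : (a₁ :: a₃ :: xs).getLast (by simp) = xs.getLast hne := by
          rw [List.getLast_cons (by simp), List.getLast_cons]
        have hf := List.formPerm_apply_getLast a₁ (a₃ :: xs)
        rw [hlast] at hf
        rw [hf]
        -- τ' a₂ = a₁
        have hlt' : (1:ℕ) + 1 < ([a₃, a₂, a₁] : List ℕ).length := by simp
        have := List.formPerm_apply_lt_getElem _ hτ 1 hlt'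
        simpa using this
      · by_cases hzx : z ∈ xs
        · -- τ' z = z
          have hτz : ([a₃, a₂, a₁] : List ℕ).formPerm z = z := by
            apply List.formPerm_apply_of_notMem
            simp only [List.mem_cons]
            push_neg
            refine ⟨hz3, hz2, hz1, by simp⟩
          rw [hτz]
          have hzr : z ∈ xs.reverse := by simpa using hzx
          obtain ⟨j, hj, hzj⟩ := List.getElem_of_mem hzr
          have hjlen : j < xs.length := by simpa using hj
          by_cases hjl : j = xs.length - 1
          · -- z = head of xs = getLast of xs.reverse
            have hzlast : z = (a₃ :: a₂ :: xs.reverse).getLast (by simp) := by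
              rw [List.getLast_cons (by simp), List.getLast_cons (by simpa using hne)]
              rw [← hzj, List.getLast_eq_getElem]
              apply getElem_idx_congr
              simp [hjl]
            have hg := List.formPerm_apply_getLast a₃ (a₂ :: xs.reverse)
            rw [← hzlast] at hg
            rw [hg]
            -- f a₃ = xs[0]
            have hlt : (1:ℕ) + 1 < (a₁ :: a₃ :: xs).length := by simp; omega
            have hf := List.formPerm_apply_lt_getElem _ hL1 1 hlt
            simp only [List.getElem_cons_succ, List.getElem_cons_zero] at hf
            rw [hf]
            have hfin : xs.reverse[j]'hj = xs[0]'(by omega) :=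
              (List.getElem_reverse _).trans (getElem_idx_congr (by omega) (by omega))
            exact hzj.symm.trans hfin
          · -- j < xs.length - 1
            have hjlt : j + 1 < xs.length := by omega
            have hg := List.formPerm_apply_lt_getElem _ hL2 (j+2) (by simp; omega)
            simp only [List.getElem_cons_succ] at hg
            rw [hzj] at hg
            rw [hg]
            obtain ⟨t, htt⟩ : ∃ t, t = xs.length - 2 - j := ⟨_, rfl⟩
            have h1' : xs.reverse[j+1]'(by simpa using hjlt) = xs[t]'(by omega) :=
              (List.getElem_reverse _).trans (getElem_idx_congr (by omega) (by omega))
            rw [h1']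
            have hf := List.formPerm_apply_lt_getElem _ hL1 (t+2) (by simp; omega)
            simp only [List.getElem_cons_succ] at hf
            rw [hf]
            have hfin : xs.reverse[j]'hj = xs[t+1]'(by omega) :=
              (List.getElem_reverse _).trans (getElem_idx_congr (by omega) (by omega))
            exact hzj.symm.trans hfin
        · -- z fixed everywhere
          have hτz : ([a₃, a₂, a₁] : List ℕ).formPerm z = z := by
            apply List.formPerm_apply_of_notMem
            simp only [List.mem_cons]; push_neg; exact ⟨hz3, hz2, hz1, by simp⟩
          have hg : (a₃ :: a₂ :: xs.reverse).formPerm z = z := by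
            apply List.formPerm_apply_of_notMem
            simp only [List.mem_cons, List.mem_reverse]; push_neg; exact ⟨hz3, hz2, hzx⟩
          have hf : (a₁ :: a₃ :: xs).formPerm z = z := by
            apply List.formPerm_apply_of_notMem
            simp only [List.mem_cons]; push_neg; exact ⟨hz1, hz3, hzx⟩
          rw [hτz, hg, hf]


theorem stmt5 (m n : ℕ) (hm : 3 ≤ m) (hn : m ≤ n)
    (a₁ a₂ a₃ : ℕ) (ha : ([a₁, a₂, a₃] : List ℕ).Nodup)
    (hb : ∀ a ∈ ([a₁, a₂, a₃] : List ℕ), 1 ≤ a ∧ a ≤ n)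
    (xs : List ℕ) (hxs : xs.Nodup) (hxl : xs.length = m - 2)
    (hout : ∀ x ∈ xs, n < x) :
    (([a₁, a₂, a₃] : List ℕ).formPerm)⁻¹ =
      (a₁ :: a₃ :: xs).formPerm * (a₃ :: a₂ :: xs.reverse).formPerm ∧
    (a₁ :: a₃ :: xs).length = m ∧ (a₃ :: a₂ :: xs.reverse).length = m ∧
    (∃ x ∈ xs, (a₁ :: a₃ :: xs).formPerm x ≠ x) ∧
    (∃ x ∈ xs, (a₃ :: a₂ :: xs.reverse).formPerm x ≠ x) ∧
    (a₁ :: a₃ :: xs).toFinset ≠ (a₃ :: a₂ :: xs.reverse).toFinset := by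
  simp only [List.nodup_cons, List.mem_cons, List.not_mem_nil, or_false,
    List.nodup_nil, and_true, List.mem_singleton, not_or] at ha
  obtain ⟨⟨h12, h13⟩, h23, -⟩ := ha
  have hb1 := hb a₁ (by simp)
  have hb2 := hb a₂ (by simp)
  have hb3 := hb a₃ (by simp)
  have h1 : a₁ ∉ xs := fun h => absurd (hout _ h) (by omega)
  have h2 : a₂ ∉ xs := fun h => absurd (hout _ h) (by omega)
  have h3 : a₃ ∉ xs := fun h => absurd (hout _ h) (by omega)
  have hne : xs ≠ [] := by
    intro h
    rw [h] at hxl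
    simp at hxl
    omega
  refine ⟨aux_eq a₁ a₂ a₃ xs h12 h13 h23 hxs hne h1 h2 h3, ?_, ?_, ?_, ?_, ?_⟩
  · simp only [List.length_cons, hxl]; omega
  · simp only [List.length_cons, List.length_reverse, hxl]; omega
  · refine ⟨xs.getLast hne, List.getLast_mem hne, ?_⟩
    have hlast : (a₁ :: a₃ :: xs).getLast (by simp) = xs.getLast hne := by
      rw [List.getLast_cons (by simp), List.getLast_cons]
    have hf := List.formPerm_apply_getLast a₁ (a₃ :: xs)
    rw [hlast] at hf
    rw [hf]
    have := hout _ (List.getLast_mem hne)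
    omega
  · refine ⟨xs.head hne, List.head_mem hne, ?_⟩
    have hlast : (a₃ :: a₂ :: xs.reverse).getLast (by simp) = xs.head hne := by
      rw [List.getLast_cons (by simp), List.getLast_cons (by simpa using hne), List.getLast_reverse]
    have hf := List.formPerm_apply_getLast a₃ (a₂ :: xs.reverse)
    rw [hlast] at hf
    rw [hf]
    have := hout _ (List.head_mem hne)
    omega
  · intro h
    have ha1 : a₁ ∈ (a₃ :: a₂ :: xs.reverse).toFinset := by
      rw [← h]; simp
    simp only [List.toFinset_cons, Finset.mem_insert, List.mem_toFinset,
      List.mem_reverse] at ha1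
    rcases ha1 with h' | h' | h'
    · exact h13 h'
    · exact h12 h'
    · exact h1 h'
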